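/- Let m and a be positive integers with m coprime to (a-1)!. Then in the ring (ZMod m)⟦q⟧ of formal power series over ℤ/mℤ, the identity (∑_{ℓ=0}^{m-1} C(a-1+ℓ, a-1) q^ℓ) · (1-q)^a = 1 - q^m holds. Equivalently, (1-q)^{-a} = (1-q^m)^{-1} · ∑_{ℓ=0}^{m-1} C(a-1+ℓ, a-1) q^ℓ, where the inverses exist in (ZMod m)⟦q⟧ since the relevant constant terms are 1. -/

import Mathlib

open PowerSeries Finset

lemma ascFactorial_cast_congr (m k : ℕ) {x y : ℕ} (h : (x : ZMod m) = (y : ZMod m)) :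
    ((x.ascFactorial k : ℕ) : ZMod m) = ((y.ascFactorial k : ℕ) : ZMod m) := by
  induction k with
  | zero => simp
  | succ k ih =>
    rw [Nat.ascFactorial_succ, Nat.ascFactorial_succ]
    push_cast
    rw [h, ih]

lemma choose_cast_congr (m k : ℕ) (hcop : Nat.Coprime m (Nat.factorial k)) {n : ℕ}
    (hn : m ≤ n) :
    (((k + n).choose k : ℕ) : ZMod m) = (((k + (n - m)).choose k : ℕ) : ZMod m) := by
  have hu : IsUnit ((Nat.factorial k : ℕ) : ZMod m) :=
    (ZMod.isUnit_iff_coprime _ _).mpr hcop.symm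
  apply hu.mul_left_cancel
  have h1 := Nat.ascFactorial_eq_factorial_mul_choose n k
  have h2 := Nat.ascFactorial_eq_factorial_mul_choose (n - m) k
  have key : (((n + 1).ascFactorial k : ℕ) : ZMod m)
      = (((n - m + 1).ascFactorial k : ℕ) : ZMod m) := by
    apply ascFactorial_cast_congr
    push_cast
    have : ((n - m : ℕ) : ZMod m) = (n : ZMod m) := by
      have : ((n - m + m : ℕ) : ZMod m) = (n : ZMod m) := by
        rw [Nat.sub_add_cancel hn]
      push_cast at this
      simpa using this
    rw [this]
  rw [show k + n = n + k from Nat.add_comm _ _, show k + (n - m) = n - m + k from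
    Nat.add_comm _ _]
  calc (((Nat.factorial k : ℕ)) : ZMod m) * ((n + k).choose k : ZMod m)
      = (((n + 1).ascFactorial k : ℕ) : ZMod m) := by rw [h1]; push_cast; ring
    _ = (((n - m + 1).ascFactorial k : ℕ) : ZMod m) := key
    _ = _ := by rw [h2]; push_cast; ring

/-- **Proposition 1 of the paper.** For positive integers `m, a` with `m`
coprime to `(a-1)!`, in the ring `(ZMod m)⟦q⟧` of formal power series we have
`(∑_{ℓ=0}^{m-1} C(a-1+ℓ, a-1) q^ℓ) · (1-q)^a = 1 - q^m`,
i.e. `(1-q)^{-a} = (1-q^m)^{-1} · ∑_{ℓ=0}^{m-1} C(a-1+ℓ, a-1) q^ℓ`. -/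
theorem one_sub_X_pow_inv_expansion (m a : ℕ) (hm : 0 < m) (ha : 0 < a)
    (hcop : Nat.Coprime m (Nat.factorial (a - 1))) :
    (∑ ℓ ∈ range m, (PowerSeries.C (R := ZMod m)) ((a - 1 + ℓ).choose (a - 1) : ZMod m) * X ^ ℓ)
      * (1 - X) ^ a = 1 - X ^ m := by
  set k := a - 1 with hk
  set F : (ZMod m)⟦X⟧ := mk fun n => ((k + n).choose k : ZMod m) with hF
  have hFinv : F * (1 - X) ^ a = 1 := by
    have h1 : (invOneSubPow (ZMod m) a).val = F := by
      rw [invOneSubPow_val_eq_mk_sub_one_add_choose_of_pos _ a ha, hF]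
    have h2 : (invOneSubPow (ZMod m) a).inv = (1 - X : (ZMod m)⟦X⟧) ^ a :=
      invOneSubPow_inv_eq_one_sub_pow _ a
    have := (invOneSubPow (ZMod m) a).val_inv
    rw [h1, h2] at this
    exact this
  have hS : (∑ ℓ ∈ range m,
      (PowerSeries.C (R := ZMod m)) ((k + ℓ).choose k : ZMod m) * X ^ ℓ) = (1 - X ^ m) * F := by
    ext n
    rw [sub_mul, one_mul, map_sub, coeff_X_pow_mul']
    rw [map_sum]
    simp only [coeff_C_mul, coeff_X_pow, mul_ite, mul_one, mul_zero]
    rw [Finset.sum_ite_eq (range m) n]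
    simp only [mem_range, hF, coeff_mk]
    by_cases h : n < m
    · simp [h, Nat.not_le.mpr h]
    · have hle : m ≤ n := Nat.not_lt.mp h
      simp only [h, if_false, hle, if_true]
      rw [choose_cast_congr m k hcop hle]
      ring
  rw [hS, mul_assoc, hFinv, mul_one]
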